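/- Let F be a field of characteristic 0 and n a positive integer. Let A = ℤ^n with standard basis ε_1, …, ε_n, let T be an n-dimensional F-vector space with basis ∂_1, …, ∂_n, and let φ : T × A → F be the map F-linear in the first variable and additive in the second determined by φ(∂_i, ε_j) = δ_{ij}. Then the generalized Witt algebra W(ℤ^n, T, φ) is isomorphic as a Lie algebra over F to Der_F(F[t_1^{±1}, …, t_n^{±1}]), the Lie algebra of F-linear derivations of the Laurent polynomial ring in n variables over F, via the map sending t^α ∂_i to the derivation t^α t_i (∂/∂t_i). -/

import Mathlib

/-! Generalized Witt algebras `W(A,T,φ)` over a field `F` of characteristic `0`,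
following Djokovic-Zhao. Here `A` is an (additive) abelian group, `T` an
`F`-vector space, and `φ : T × A → F` is `F`-linear in the first variable and
additive in the second (encoded as `φ : T →ₗ[F] (A →+ F)`). -/

namespace GW

variable {F : Type*} [Field F]
variable {A : Type*} [AddCommGroup A]
variable {T : Type*} [AddCommGroup T] [Module F T]
variable (φ : T →ₗ[F] (A →+ F))

/-- The bracket on finitely supported functions `A →₀ T`: the bilinear extension of
`[t^α a, t^β b] = t^(α+β) (φ a β • b - φ b α • a)`. -/
noncomputable def brk (x y : A →₀ T) : A →₀ T :=
  x.sum fun α a => y.sum fun β b => Finsupp.single (α + β) (φ a β • b - φ b α • a)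

lemma brk_zero_left (y : A →₀ T) : brk φ 0 y = 0 := by
  simp [brk]

lemma brk_zero_right (x : A →₀ T) : brk φ x 0 = 0 := by
  simp [brk]

lemma brk_single_single (α β : A) (a b : T) :
    brk φ (Finsupp.single α a) (Finsupp.single β b)
      = Finsupp.single (α + β) (φ a β • b - φ b α • a) := by
  unfold brk
  rw [Finsupp.sum_single_index, Finsupp.sum_single_index]
  · simp
  · simp

lemma brk_add_left (x x' y : A →₀ T) : brk φ (x + x') y = brk φ x y + brk φ x' y := by
  unfold brk
  rw [Finsupp.sum_add_index']
  · intro α; simp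
  · intro α a a'
    rw [← Finsupp.sum_add]
    congr 1
    funext β b
    rw [← Finsupp.single_add]
    congr 1
    simp only [map_add, LinearMap.add_apply, AddMonoidHom.add_apply, add_smul, smul_add]
    abel

lemma brk_add_right (x y y' : A →₀ T) : brk φ x (y + y') = brk φ x y + brk φ x y' := by
  unfold brk
  rw [← Finsupp.sum_add]
  congr 1
  funext α a
  rw [Finsupp.sum_add_index']
  · intro β; simp
  · intro β b b'
    rw [← Finsupp.single_add]
    congr 1
    simp only [map_add, LinearMap.add_apply, AddMonoidHom.add_apply, add_smul, smul_add]
    abel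

lemma brk_neg_swap (x y : A →₀ T) : brk φ y x = - brk φ x y := by
  unfold brk
  rw [Finsupp.sum_comm]
  rw [← Finsupp.sum_neg]
  congr 1
  funext α a
  rw [← Finsupp.sum_neg]
  congr 1
  funext β b
  rw [← Finsupp.single_neg, add_comm β α]
  congr 1
  abel

lemma brk_smul_right (c : F) (x y : A →₀ T) : brk φ x (c • y) = c • brk φ x y := by
  unfold brk
  rw [Finsupp.smul_sum]
  congr 1
  funext α a
  rw [Finsupp.sum_smul_index', Finsupp.smul_sum]
  · congr 1
    funext β b
    rw [Finsupp.smul_single]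
    congr 1
    simp only [map_smul, LinearMap.smul_apply, AddMonoidHom.smul_apply, smul_sub, smul_smul,
      smul_eq_mul]
    rw [mul_comm]
  · intro β; simp

lemma brk_self [CharZero F] (x : A →₀ T) : brk φ x x = 0 := by
  have h : brk φ x x = -brk φ x x := brk_neg_swap φ x x
  have h2 : (2 : F) • brk φ x x = 0 := by
    rw [two_smul]
    nth_rewrite 2 [h]
    simp
  calc brk φ x x = (2 : F)⁻¹ • ((2 : F) • brk φ x x) :=
        (inv_smul_smul₀ two_ne_zero _).symm
    _ = 0 := by rw [h2, smul_zero]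

lemma brk_leibniz (x y z : A →₀ T) :
    brk φ x (brk φ y z) = brk φ (brk φ x y) z + brk φ y (brk φ x z) := by
  induction x using Finsupp.induction_linear with
  | zero => simp [brk_zero_left, brk_zero_right]
  | add f g hf hg =>
      simp only [brk_add_left, brk_add_right, hf, hg]; abel
  | single α a =>
    induction y using Finsupp.induction_linear with
    | zero => simp [brk_zero_left, brk_zero_right]
    | add f g hf hg =>
        simp only [brk_add_left, brk_add_right, hf, hg]; abel
    | single β b =>
      induction z using Finsupp.induction_linear with
      | zero => simp [brk_zero_left, brk_zero_right]
      | add f g hf hg =>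
          simp only [brk_add_left, brk_add_right, hf, hg]; abel
      | single γ c =>
        rw [brk_single_single, brk_single_single, brk_single_single, brk_single_single,
          brk_single_single, brk_single_single]
        rw [show β + (α + γ) = α + β + γ by abel, show α + (β + γ) = α + β + γ by abel,
          ← Finsupp.single_add]
        congr 1
        simp only [map_add, map_sub, map_smul, LinearMap.sub_apply, LinearMap.smul_apply,
          AddMonoidHom.add_apply, AddMonoidHom.sub_apply, AddMonoidHom.smul_apply,
          smul_eq_mul, smul_sub, sub_smul, add_smul, smul_smul]
        ring_nf
        module

variable (F A T) in
/-- The carrier of the generalized Witt algebra `W(A,T,φ)`: finitely supported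
functions from `A` to `T`, where `t^α ∂` corresponds to the function supported
at `α` with value `∂`. -/
@[nolint unusedArguments]
def W (_φ : T →ₗ[F] (A →+ F)) : Type _ := A →₀ T

noncomputable instance : AddCommGroup (W F A T φ) := inferInstanceAs (AddCommGroup (A →₀ T))

noncomputable instance : Module F (W F A T φ) := inferInstanceAs (Module F (A →₀ T))

/-- The element `t^α ∂` of the generalized Witt algebra. -/
noncomputable def tt (α : A) (d : T) : W F A T φ := Finsupp.single α d

/-- The underlying finitely supported function of an element of `W(A,T,φ)`. -/
def toF (x : W F A T φ) : A →₀ T := x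

/-- The Lie ring structure on the generalized Witt algebra `W(A,T,φ)`, with bracket
determined by `[t^α ∂, t^β ∂'] = t^(α+β) (φ(∂,β) • ∂' - φ(∂',α) • ∂)`. -/
noncomputable instance [CharZero F] : LieRing (W F A T φ) :=
  { (inferInstanceAs (AddCommGroup (A →₀ T)) : AddCommGroup (A →₀ T)) with
    bracket := fun x y => brk φ (toF φ x) (toF φ y)
    add_lie := fun x y z => brk_add_left φ x y z
    lie_add := fun x y z => brk_add_right φ x y z
    lie_self := fun x => brk_self φ x
    leibniz_lie := fun x y z => brk_leibniz φ x y z }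

/-- The generalized Witt algebra `W(A,T,φ)` as a Lie algebra over `F`. -/
noncomputable instance [CharZero F] : LieAlgebra F (W F A T φ) :=
  { (inferInstanceAs (Module F (A →₀ T)) : Module F (A →₀ T)) with
    lie_smul := fun c x y => brk_smul_right φ c x y }

@[simp] theorem bracket_tt [CharZero F] (α β : A) (a b : T) :
    ⁅tt φ α a, tt φ β b⁆ = tt φ (α + β) (φ a β • b - φ b α • a) :=
  brk_single_single φ α β a b

/-- Nondegeneracy of the map `φ`. -/
def Nondeg : Prop :=
  (∀ α : A, (∀ d : T, φ d α = 0) → α = 0) ∧ (∀ d : T, (∀ α : A, φ d α = 0) → d = 0)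

/-- `(A', T')` is a nondegenerate pair for `φ`. -/
def NondegPair (A' : AddSubgroup A) (T' : Submodule F T) : Prop :=
  (∀ d ∈ T', (∀ α ∈ A', φ d α = 0) → d = 0) ∧
  (∀ α ∈ A', (∀ d ∈ T', φ d α = 0) → α = 0)

/-- The subset (in fact Lie subalgebra) of `W(A,T,φ)` consisting of the finitely
supported functions supported in `A'` with values in `T'`. -/
def supportedIn (A' : AddSubgroup A) (T' : Submodule F T) : Set (W F A T φ) :=
  {x | (∀ α : A, toF φ x α ∈ T') ∧ ∀ α : A, α ∉ A' → toF φ x α = 0}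

end GW



/-- The pairing `φ(∂, α) = Σ_i ∂_i α_i` on `(Fin n → F) × (Fin n → ℤ)`, i.e. the map
determined by `φ(∂_i, ε_j) = δ_ij`. -/
noncomputable def phiFin (F : Type*) [Field F] (n : ℕ) :
    (Fin n → F) →ₗ[F] ((Fin n → ℤ) →+ F) where
  toFun d :=
  { toFun := fun α => ∑ i, d i * (α i : F)
    map_zero' := by simp
    map_add' := by
      intro α β
      simp [mul_add, Finset.sum_add_distrib] }
  map_add' d d' := by
    refine AddMonoidHom.ext fun α => ?_
    simp [add_mul, Finset.sum_add_distrib]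
  map_smul' c d := by
    refine AddMonoidHom.ext fun α => ?_
    simp [Finset.mul_sum, mul_assoc]


namespace WittLaurent

variable {F : Type*} [Field F] {n : ℕ}

/-- projection `d ↦ φ(d, β)` as a linear map. -/
noncomputable def proj (F : Type*) [Field F] (n : ℕ) (β : Fin n → ℤ) : (Fin n → F) →ₗ[F] F where
  toFun d := phiFin F n d β
  map_add' d d' := by simp
  map_smul' c d := by simp

@[simp] lemma proj_apply (β : Fin n → ℤ) (d : Fin n → F) : proj F n β d = phiFin F n d β := rfl

/-- `E β x = Σ_α single (α+β) (φ (x α) β)`. -/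
noncomputable def E (F : Type*) [Field F] (n : ℕ) (β : Fin n → ℤ) :
    ((Fin n → ℤ) →₀ (Fin n → F)) →ₗ[F] AddMonoidAlgebra F (Fin n → ℤ) :=
  Finsupp.lsum F fun α =>
    (AddMonoidAlgebra.lsingle (α + β) : F →ₗ[F] AddMonoidAlgebra F (Fin n → ℤ)).comp (proj F n β)

@[simp] lemma E_single (β α : Fin n → ℤ) (d : Fin n → F) :
    E F n β (Finsupp.single α d) = AddMonoidAlgebra.single (α + β) (phiFin F n d β) := by
  simp [E]

lemma E_apply (β : Fin n → ℤ) (x : (Fin n → ℤ) →₀ (Fin n → F)) (γ : Fin n → ℤ) :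
    (E F n β x).coeff γ = phiFin F n (x (γ - β)) β := by
  classical
  induction x using Finsupp.induction_linear with
  | zero => simp
  | add f g hf hg =>
      rw [map_add]
      show (E F n β f + E F n β g).coeff γ = _
      rw [AddMonoidAlgebra.coeff_add, Finsupp.add_apply, hf, hg, Finsupp.add_apply, map_add]
      simp
  | single α d =>
      rw [E_single]
      show (AddMonoidAlgebra.single (α + β) (phiFin F n d β)).coeff γ = _
      rw [AddMonoidAlgebra.coeff_single, Finsupp.single_apply, Finsupp.single_apply]
      by_cases h : α + β = γ
      · have : γ - β = α := by rw [← h]; abel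
        simp [h, this]
      · have h2 : ¬ α = γ - β := fun hc => h (by rw [hc]; abel)
        simp [h, h2]

end WittLaurent

namespace WittLaurent
variable {F : Type*} [Field F] {n : ℕ}

lemma E_zero (x : (Fin n → ℤ) →₀ (Fin n → F)) : E F n 0 x = 0 := by
  refine AddMonoidAlgebra.ext (Finsupp.ext fun γ => ?_)
  rw [E_apply]
  simp

lemma smul_single_one (β : Fin n → ℤ) (b : F) :
    (AddMonoidAlgebra.single β b : AddMonoidAlgebra F (Fin n → ℤ))
      = b • AddMonoidAlgebra.single β 1 := by
  rw [AddMonoidAlgebra.smul_single', mul_one]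

lemma E_add_exp (β γ : Fin n → ℤ) (x : (Fin n → ℤ) →₀ (Fin n → F)) :
    E F n (β + γ) x = AddMonoidAlgebra.single β (1:F) * E F n γ x
      + AddMonoidAlgebra.single γ (1:F) * E F n β x := by
  refine AddMonoidAlgebra.ext (Finsupp.ext fun δ => ?_)
  have h1 : (AddMonoidAlgebra.single β (1:F) * E F n γ x
      + AddMonoidAlgebra.single γ (1:F) * E F n β x).coeff δ
      = (AddMonoidAlgebra.single β (1:F) * E F n γ x).coeff δ
        + (AddMonoidAlgebra.single γ (1:F) * E F n β x).coeff δ := rfl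
  rw [h1, AddMonoidAlgebra.coeff_single_mul_apply, AddMonoidAlgebra.coeff_single_mul_apply,
    E_apply, E_apply, E_apply, one_mul, one_mul]
  have e1 : -β + δ - γ = δ - (β + γ) := by abel
  have e2 : -γ + δ - β = δ - (β + γ) := by abel
  rw [e1, e2, map_add]
  exact add_comm _ _

noncomputable def D0 (x : (Fin n → ℤ) →₀ (Fin n → F)) :
    AddMonoidAlgebra F (Fin n → ℤ) →ₗ[F] AddMonoidAlgebra F (Fin n → ℤ) :=
  (Finsupp.lsum F fun β => LinearMap.toSpanSingleton F _ (E F n β x)) ∘ₗ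
    (AddMonoidAlgebra.coeffLinearEquiv F).toLinearMap

@[simp] lemma D0_single (x : (Fin n → ℤ) →₀ (Fin n → F)) (β : Fin n → ℤ) (c : F) :
    D0 x (AddMonoidAlgebra.single β c) = c • E F n β x := by
  have := Finsupp.lsum_single (R := F) (S := F)
    (f := fun β => LinearMap.toSpanSingleton F (AddMonoidAlgebra F (Fin n → ℤ)) (E F n β x)) β c
  rw [D0, LinearMap.comp_apply]
  erw [this]
  rw [LinearMap.toSpanSingleton_apply]

lemma D0_leibniz (x : (Fin n → ℤ) →₀ (Fin n → F))
    (a b : AddMonoidAlgebra F (Fin n → ℤ)) :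
    D0 x (a * b) = a • D0 x b + b • D0 x a := by
  induction a using AddMonoidAlgebra.induction_linear with
  | zero => simp
  | add f g hf hg =>
      rw [add_mul, map_add, hf, hg, map_add, smul_add, add_smul]
      abel
  | single β b0 =>
    induction b using AddMonoidAlgebra.induction_linear with
    | zero => simp
    | add f g hf hg =>
        rw [mul_add, map_add, hf, hg, map_add, smul_add, add_smul]
        abel
    | single γ c =>
      rw [AddMonoidAlgebra.single_mul_single, D0_single, D0_single, D0_single, E_add_exp]
      simp only [smul_eq_mul, smul_single_one β b0, smul_single_one γ c,
        smul_mul_assoc, mul_smul_comm, smul_smul, smul_add]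
      rw [mul_comm c b0]

noncomputable def D (x : (Fin n → ℤ) →₀ (Fin n → F)) :
    Derivation F (AddMonoidAlgebra F (Fin n → ℤ)) (AddMonoidAlgebra F (Fin n → ℤ)) where
  toLinearMap := D0 x
  map_one_eq_zero' := by
    rw [AddMonoidAlgebra.one_def]
    show D0 x (AddMonoidAlgebra.single 0 1) = 0
    rw [D0_single, E_zero, smul_zero]
  leibniz' := D0_leibniz x

@[simp] lemma D_single (x : (Fin n → ℤ) →₀ (Fin n → F)) (β : Fin n → ℤ) (c : F) :
    D x (AddMonoidAlgebra.single β c) = c • E F n β x :=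
  D0_single x β c

lemma D_add (x y : (Fin n → ℤ) →₀ (Fin n → F)) : D (x + y) = D x + D y := by
  refine Derivation.ext fun a => ?_
  induction a using AddMonoidAlgebra.induction_linear with
  | zero => simp
  | add f g hf hg => simp only [map_add, Derivation.add_apply] at hf hg ⊢; rw [hf, hg]
  | single β c => rw [D_single, Derivation.add_apply, D_single, D_single, map_add, smul_add]

lemma D_smul (c : F) (x : (Fin n → ℤ) →₀ (Fin n → F)) : D (c • x) = c • D x := by
  refine Derivation.ext fun a => ?_
  induction a using AddMonoidAlgebra.induction_linear with
  | zero => simp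
  | add f g hf hg => simp only [map_add, Derivation.smul_apply, smul_add] at hf hg ⊢; rw [hf, hg]
  | single β b => rw [D_single, Derivation.smul_apply, D_single, map_smul, smul_comm]

end WittLaurent
namespace WittLaurent
variable {F : Type*} [Field F] {n : ℕ}

/-- the standard basis vector `ε_j` of `ℤⁿ`. -/
def eps (n : ℕ) (j : Fin n) : Fin n → ℤ := Pi.single j 1

lemma phi_eps (d : Fin n → F) (j : Fin n) : phiFin F n d (eps n j) = d j := by
  simp only [phiFin, eps, LinearMap.coe_mk, AddHom.coe_mk, AddMonoidHom.coe_mk,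
    ZeroHom.coe_mk, Pi.single_apply]
  rw [Finset.sum_congr rfl (fun i _ => ?_), Finset.sum_ite_eq' Finset.univ j d]
  · simp
  · by_cases h : i = j <;> simp [h]

lemma phi_pi_single (v : F) (j : Fin n) (β : Fin n → ℤ) :
    phiFin F n (Pi.single j v) β = v * (β j : F) := by
  simp only [phiFin, LinearMap.coe_mk, AddHom.coe_mk, AddMonoidHom.coe_mk,
    ZeroHom.coe_mk, Pi.single_apply]
  rw [Finset.sum_congr rfl (fun i _ => ?_), Finset.sum_ite_eq' Finset.univ j
    (fun i => v * (β i : F))]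
  · simp
  · by_cases h : i = j <;> simp [h]

/-- the inverse map, reading off the coefficients of a derivation. -/
noncomputable def psi (Dv : Derivation F (AddMonoidAlgebra F (Fin n → ℤ))
    (AddMonoidAlgebra F (Fin n → ℤ))) : (Fin n → ℤ) →₀ (Fin n → F) :=
  ∑ j, Finsupp.mapRange (Pi.single j) (Pi.single_zero j)
    (show (Fin n → ℤ) →₀ F from
      (AddMonoidAlgebra.single (-(eps n j)) (1:F) * Dv (AddMonoidAlgebra.single (eps n j) 1)).coeff)

lemma psi_apply (Dv : Derivation F (AddMonoidAlgebra F (Fin n → ℤ))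
    (AddMonoidAlgebra F (Fin n → ℤ))) (α : Fin n → ℤ) :
    psi Dv α = fun j =>
      (AddMonoidAlgebra.single (-(eps n j)) (1:F)
        * Dv (AddMonoidAlgebra.single (eps n j) 1)).coeff α := by
  rw [psi, Finsupp.finset_sum_apply]
  simp only [Finsupp.mapRange_apply]
  exact Finset.univ_sum_single _

lemma psi_D (x : (Fin n → ℤ) →₀ (Fin n → F)) : psi (D x) = x := by
  refine Finsupp.ext fun α => ?_
  rw [psi_apply]
  funext j
  rw [D_single, one_smul, AddMonoidAlgebra.coeff_single_mul_apply, one_mul, E_apply]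
  have e : - -eps n j + α - eps n j = α := by abel
  rw [e, phi_eps]

end WittLaurent
namespace WittLaurent
variable {F : Type*} [Field F] {n : ℕ}

lemma phi_neg_eps (d : Fin n → F) (j : Fin n) :
    phiFin F n d (-(eps n j)) = -(d j) := by
  rw [map_neg, phi_eps]

lemma prod_single_one (s : Finset (Fin n)) (f : Fin n → (Fin n → ℤ)) :
    (∏ j ∈ s, (AddMonoidAlgebra.single (f j) (1:F) : AddMonoidAlgebra F (Fin n → ℤ)))
      = AddMonoidAlgebra.single (∑ j ∈ s, f j) 1 := by
  classical
  induction s using Finset.induction_on with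
  | empty => rw [Finset.prod_empty, Finset.sum_empty, AddMonoidAlgebra.one_def]
  | insert j s hj ih =>
      rw [Finset.prod_insert hj, Finset.sum_insert hj, ih,
        AddMonoidAlgebra.single_mul_single, one_mul]

/-- the generators `t^{±ε_j}` of the Laurent polynomial algebra. -/
def gens (F : Type*) [Field F] (n : ℕ) : Set (AddMonoidAlgebra F (Fin n → ℤ)) :=
  (Set.range fun j : Fin n => AddMonoidAlgebra.single (eps n j) (1:F)) ∪
    (Set.range fun j : Fin n => AddMonoidAlgebra.single (-(eps n j)) (1:F))

lemma single_mem_adjoin (β : Fin n → ℤ) :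
    (AddMonoidAlgebra.single β (1:F)) ∈ Algebra.adjoin F (gens F n) := by
  have key : ∀ j : Fin n, (AddMonoidAlgebra.single (Pi.single j (β j)) (1:F))
      ∈ Algebra.adjoin F (gens F n) := by
    intro j
    rcases le_or_gt 0 (β j) with h | h
    · have heq : AddMonoidAlgebra.single (Pi.single j (β j)) (1:F)
          = (AddMonoidAlgebra.single (eps n j) (1:F)) ^ (β j).toNat := by
        rw [AddMonoidAlgebra.single_pow, one_pow]
        congr 1
        funext i
        by_cases hij : i = j
        · subst hij; simp [eps, Pi.single_apply, nsmul_eq_mul]; omega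
        · simp [eps, Pi.single_apply, hij]
      have hg : AddMonoidAlgebra.single (eps n j) (1:F) ∈ gens F n :=
        Set.mem_union_left _ ⟨j, rfl⟩
      rw [heq]
      exact pow_mem (Algebra.subset_adjoin hg) _
    · have heq : AddMonoidAlgebra.single (Pi.single j (β j)) (1:F)
          = (AddMonoidAlgebra.single (-(eps n j)) (1:F)) ^ (-(β j)).toNat := by
        rw [AddMonoidAlgebra.single_pow, one_pow]
        congr 1
        funext i
        by_cases hij : i = j
        · subst hij; simp [eps, Pi.single_apply, nsmul_eq_mul]; omega
        · simp [eps, Pi.single_apply, hij]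
      have hg : AddMonoidAlgebra.single (-(eps n j)) (1:F) ∈ gens F n :=
        Set.mem_union_right _ ⟨j, rfl⟩
      rw [heq]
      exact pow_mem (Algebra.subset_adjoin hg) _
  have hβ : β = ∑ j, Pi.single j (β j) := (Finset.univ_sum_single β).symm
  have : AddMonoidAlgebra.single β (1:F)
      = ∏ j, AddMonoidAlgebra.single (Pi.single j (β j)) (1:F) := by
    rw [prod_single_one, ← hβ]
  rw [this]
  exact prod_mem fun j _ => key j

lemma adjoin_gens_eq_top : Algebra.adjoin F (gens F n) = ⊤ := by
  rw [eq_top_iff]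
  rintro y -
  have hy : y = y.coeff.sum fun β c => c • AddMonoidAlgebra.single β (1:F) := by
    conv_lhs => rw [← AddMonoidAlgebra.sum_single y]
    exact Finsupp.sum_congr fun β _ => smul_single_one β (y.coeff β)
  rw [hy, Finsupp.sum]
  exact sum_mem fun β _ => SMulMemClass.smul_mem _ (single_mem_adjoin β)

lemma D_psi (Dv : Derivation F (AddMonoidAlgebra F (Fin n → ℤ))
    (AddMonoidAlgebra F (Fin n → ℤ))) : D (psi Dv) = Dv := by
  refine Derivation.ext_of_adjoin_eq_top (gens F n) adjoin_gens_eq_top ?_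
  rintro z (⟨j, rfl⟩ | ⟨j, rfl⟩)
  · rw [D_single, one_smul]
    refine AddMonoidAlgebra.ext (Finsupp.ext fun γ => ?_)
    rw [E_apply, psi_apply, phi_eps]
    show (AddMonoidAlgebra.single (-(eps n j)) (1:F)
      * Dv (AddMonoidAlgebra.single (eps n j) 1)).coeff (γ - eps n j) = _
    rw [AddMonoidAlgebra.coeff_single_mul_apply, one_mul]
    have e : - -eps n j + (γ - eps n j) = γ := by abel
    rw [e]
  · have h1 : (AddMonoidAlgebra.single (eps n j) (1:F) : AddMonoidAlgebra F (Fin n → ℤ))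
        * AddMonoidAlgebra.single (-(eps n j)) 1 = 1 := by
      rw [AddMonoidAlgebra.single_mul_single, mul_one, add_neg_cancel,
        AddMonoidAlgebra.one_def]
    have h1' : (AddMonoidAlgebra.single (-(eps n j)) (1:F) : AddMonoidAlgebra F (Fin n → ℤ))
        * AddMonoidAlgebra.single (eps n j) 1 = 1 := by
      rw [AddMonoidAlgebra.single_mul_single, mul_one, neg_add_cancel,
        AddMonoidAlgebra.one_def]
    have hA : (AddMonoidAlgebra.single (eps n j) (1:F))
          * Dv (AddMonoidAlgebra.single (-(eps n j)) 1)
        = -((AddMonoidAlgebra.single (-(eps n j)) (1:F))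
          * Dv (AddMonoidAlgebra.single (eps n j) 1)) := by
      have hl := Dv.leibniz (AddMonoidAlgebra.single (eps n j) (1:F))
        (AddMonoidAlgebra.single (-(eps n j)) (1:F))
      rw [h1, Derivation.map_one_eq_zero, smul_eq_mul, smul_eq_mul] at hl
      exact eq_neg_of_add_eq_zero_left hl.symm
    have h2 : Dv (AddMonoidAlgebra.single (-(eps n j)) (1:F))
        = -(AddMonoidAlgebra.single (-(eps n j)) (1:F)
            * (AddMonoidAlgebra.single (-(eps n j)) (1:F)
              * Dv (AddMonoidAlgebra.single (eps n j) 1))) := by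
      conv_lhs => rw [← one_mul (Dv (AddMonoidAlgebra.single (-(eps n j)) (1:F))), ← h1',
        mul_assoc, hA]
      rw [mul_neg]
    rw [D_single, one_smul]
    refine AddMonoidAlgebra.ext (Finsupp.ext fun γ => ?_)
    rw [E_apply, psi_apply, phi_neg_eps]
    show -((AddMonoidAlgebra.single (-(eps n j)) (1:F)
      * Dv (AddMonoidAlgebra.single (eps n j) 1)).coeff (γ - -eps n j)) = _
    rw [h2, AddMonoidAlgebra.coeff_single_mul_apply, one_mul]
    show _ = -((AddMonoidAlgebra.single (-(eps n j)) (1:F)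
      * (AddMonoidAlgebra.single (-(eps n j)) (1:F)
        * Dv (AddMonoidAlgebra.single (eps n j) 1))).coeff γ)
    rw [AddMonoidAlgebra.coeff_single_mul_apply, one_mul, AddMonoidAlgebra.coeff_single_mul_apply, one_mul]
    have e : - -eps n j + (γ - -eps n j) = - -eps n j + (- -eps n j + γ) := by abel
    rw [e]

end WittLaurent
namespace WittLaurent
variable {F : Type*} [Field F] {n : ℕ}

lemma D_zero : D (0 : (Fin n → ℤ) →₀ (Fin n → F)) = 0 := by
  have h := D_add (0 : (Fin n → ℤ) →₀ (Fin n → F)) 0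
  rw [add_zero] at h
  have h2 := left_eq_add.mp h
  exact h2.symm ▸ rfl

lemma smul_single'' (a : F) (p : Fin n → ℤ) (b : F) :
    a • (AddMonoidAlgebra.single p b : AddMonoidAlgebra F (Fin n → ℤ))
      = AddMonoidAlgebra.single p (a * b) :=
  AddMonoidAlgebra.smul_single' a p b

lemma single_sub'' (p : Fin n → ℤ) (a b : F) :
    (AddMonoidAlgebra.single p a - AddMonoidAlgebra.single p b
      : AddMonoidAlgebra F (Fin n → ℤ)) = AddMonoidAlgebra.single p (a - b) :=
  (AddMonoidAlgebra.single_sub p a b).symm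

lemma D_brk_apply (x y : (Fin n → ℤ) →₀ (Fin n → F))
    (a : AddMonoidAlgebra F (Fin n → ℤ)) :
    D (GW.brk (phiFin F n) x y) a = D x (D y a) - D y (D x a) := by
  induction x using Finsupp.induction_linear with
  | zero => simp only [GW.brk_zero_left, D_zero, Derivation.zero_apply, map_zero, sub_zero]
  | add f g hf hg =>
      simp only [GW.brk_add_left, D_add, Derivation.add_apply, map_add, hf, hg]
      abel
  | single α d =>
    induction y using Finsupp.induction_linear with
    | zero => simp only [GW.brk_zero_right, D_zero, Derivation.zero_apply, map_zero, zero_sub,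
        neg_zero]
    | add f g hf hg =>
        simp only [GW.brk_add_right, D_add, Derivation.add_apply, map_add, hf, hg]
        abel
    | single β e =>
      rw [GW.brk_single_single]
      induction a using AddMonoidAlgebra.induction_linear with
      | zero => simp only [map_zero, sub_zero]
      | add f g hf hg => simp only [map_add, hf, hg]; abel
      | single γ c =>
        simp only [D_single, Derivation.map_smul, E_single, smul_single'']
        have e1 : α + (β + γ) = α + β + γ := (add_assoc α β γ).symm
        have e2 : β + (α + γ) = α + β + γ := by abel
        rw [e1, e2, single_sub'']
        congr 1
        simp only [map_add, map_sub, map_smul, LinearMap.sub_apply, LinearMap.smul_apply,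
          AddMonoidHom.add_apply, AddMonoidHom.sub_apply, AddMonoidHom.smul_apply,
          smul_eq_mul]
        ring

variable [CharZero F]

lemma D_brk (x y : (Fin n → ℤ) →₀ (Fin n → F)) :
    D (GW.brk (phiFin F n) x y) = ⁅D x, D y⁆ :=
  Derivation.ext fun a => (D_brk_apply x y a).trans (Eq.symm (Derivation.commutator_apply a))

noncomputable def PhiHom : GW.W F (Fin n → ℤ) (Fin n → F) (phiFin F n) →ₗ⁅F⁆
    Derivation F (AddMonoidAlgebra F (Fin n → ℤ)) (AddMonoidAlgebra F (Fin n → ℤ)) where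
  toLinearMap :=
  { toFun := fun x => D (GW.toF (phiFin F n) x)
    map_add' := fun x y => D_add _ _
    map_smul' := fun c x => D_smul c _ }
  map_lie' := fun {x y} => D_brk _ _

noncomputable def equivW : GW.W F (Fin n → ℤ) (Fin n → F) (phiFin F n) ≃ₗ⁅F⁆
    Derivation F (AddMonoidAlgebra F (Fin n → ℤ)) (AddMonoidAlgebra F (Fin n → ℤ)) :=
  { PhiHom with
    invFun := psi
    left_inv := fun x => psi_D x
    right_inv := fun Dv => D_psi Dv }

end WittLaurent


/-- the generalized Witt algebra `W(ℤⁿ, T, φ)`, with `T` an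
`n`-dimensional space with basis `∂_1, …, ∂_n` and `φ(∂_i, ε_j) = δ_ij`, is isomorphic
as a Lie algebra over `F` to `Der_F(F[t₁^{±1}, …, t_n^{±1}])`, via the map sending
`t^α ∂_i` to the derivation `t^α t_i ∂/∂t_i` (the derivation sending `t^β` to
`β_i t^(α+β)`). -/
theorem genWitt_iso_derivations_laurent
    (F : Type*) [Field F] [CharZero F] (n : ℕ) (hn : 0 < n) :
    ∃ e : GW.W F (Fin n → ℤ) (Fin n → F) (phiFin F n) ≃ₗ⁅F⁆
        Derivation F (AddMonoidAlgebra F (Fin n → ℤ)) (AddMonoidAlgebra F (Fin n → ℤ)),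
      ∀ (α : Fin n → ℤ) (i : Fin n) (β : Fin n → ℤ),
        (e (GW.tt (phiFin F n) α (Pi.single i (1 : F))))
            (AddMonoidAlgebra.single β (1 : F))
          = AddMonoidAlgebra.single (α + β) ((β i : F)) := by
  refine ⟨WittLaurent.equivW, fun α i β => ?_⟩
  show (WittLaurent.D (Finsupp.single α (Pi.single i (1:F)))) (AddMonoidAlgebra.single β 1) = _
  rw [WittLaurent.D_single, one_smul, WittLaurent.E_single, WittLaurent.phi_pi_single, one_mul]
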